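/- Let f : ℝ^n → ℝ be continuously differentiable, attain its minimum value f* at some point, and satisfy the Polyak–Łojasiewicz (PL) inequality with parameter μ > 0: (1/2)‖∇f(z)‖₂² ≥ μ(f(z) − f*) for all z ∈ ℝ^n. Let σ, ρ > 0, p ∈ [0,1), q > 1, and let g : ℝ^n → ℝ^n satisfy ⟨g(y), y⟩ ≥ σ‖y‖₂^{1+p} + ρ‖y‖₂^{1+q} for all y ∈ ℝ^n. If x : [0,∞) → ℝ^n is differentiable and satisfies the fixed-time gradient flow x′(t) = −g(∇f(x(t))) for all t ≥ 0, then f(x(t)) = f* for all t ≥ T, where T = 1/(μσ(1−p)) + 1/(μρ(q−1)); in particular the settling time is bounded uniformly in the initial state x(0). (Theorem 1.) -/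

import Mathlib

open scoped RealInnerProductSpace

private lemma decay_le {a b c : ℝ} {h h' : ℝ → ℝ} (hab : a ≤ b)
    (hd : ∀ t ∈ Set.Icc a b, HasDerivAt h (h' t) t)
    (hb : ∀ t ∈ Set.Icc a b, h' t ≤ c) :
    h b ≤ h a + c * (b - a) := by
  have hanti : AntitoneOn (fun t => h t - c * t) (Set.Icc a b) := by
    apply antitoneOn_of_deriv_nonpos (convex_Icc a b)
    · exact ContinuousOn.sub (fun t ht => (hd t ht).continuousAt.continuousWithinAt)
        (Continuous.continuousOn (by continuity))
    · intro t ht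
      rw [interior_Icc] at ht
      have ht' : t ∈ Set.Icc a b := Set.mem_Icc_of_Ioo ht
      exact ((hd t ht').sub ((hasDerivAt_id t).const_mul c)).differentiableAt.differentiableWithinAt
    · intro t ht
      rw [interior_Icc] at ht
      have ht' : t ∈ Set.Icc a b := Set.mem_Icc_of_Ioo ht
      have hder : HasDerivAt (fun t => h t - c * t) (h' t - c * 1) t := by
        exact (hd t ht').sub ((hasDerivAt_id t).const_mul c)
      rw [hder.deriv]
      have := hb t ht'
      nlinarith
  have := hanti (Set.left_mem_Icc.2 hab) (Set.right_mem_Icc.2 hab) hab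
  simp only at this
  linarith

/-- Comparison-lemma core of Theorem 1: if a nonnegative absolutely continuous
function `V` satisfies `V' ≤ -σ (2μV)^((1+p)/2) - ρ (2μV)^((1+q)/2)`, then `V`
vanishes after the fixed time `1/(μσ(1-p)) + 1/(μρ(q-1))`. -/
private lemma fxt_aux (V D : ℝ → ℝ) (μ σ ρ p q t₀ : ℝ)
    (hμ : 0 < μ) (hσ : 0 < σ) (hρ : 0 < ρ) (hp0 : 0 ≤ p) (hp1 : p < 1) (hq : 1 < q)
    (hVnn : ∀ t, 0 ≤ V t)
    (hVd : ∀ t ∈ Set.Icc (0:ℝ) t₀, HasDerivAt V (D t) t)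
    (hDB : ∀ t, D t ≤ -σ * (2 * μ * V t) ^ ((1 + p)/2) - ρ * (2 * μ * V t) ^ ((1 + q)/2))
    (ht₀ : 1 / (μ * σ * (1 - p)) + 1 / (μ * ρ * (q - 1)) ≤ t₀) :
    V t₀ = 0 := by
  have h1p : 0 < 1 - p := by linarith
  have hq1 : 0 < q - 1 := by linarith
  obtain ⟨c1, hc1def⟩ : ∃ c1 : ℝ, c1 = μ * σ * (1 - p) := ⟨_, rfl⟩
  obtain ⟨c2, hc2def⟩ : ∃ c2 : ℝ, c2 = μ * ρ * (q - 1) := ⟨_, rfl⟩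
  rw [← hc1def, ← hc2def] at ht₀
  have hc1 : 0 < c1 := by rw [hc1def]; positivity
  have hc2 : 0 < c2 := by rw [hc2def]; positivity
  have hT1 : (0:ℝ) ≤ 1 / c2 := by positivity
  have ht00 : (0:ℝ) ≤ t₀ := by
    have h01 : 0 < 1 / c1 := by positivity
    have h02 : 0 < 1 / c2 := by positivity
    linarith
  have hT1t0 : 1 / c2 ≤ t₀ := by
    have h01 : 0 < 1 / c1 := by positivity
    linarith
  have hD0 : ∀ t, D t ≤ 0 := by
    intro t
    have h1 := hDB t
    have hB0 : (0:ℝ) ≤ 2 * μ * V t := by have := hVnn t; positivity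
    have h2 : 0 ≤ σ * (2 * μ * V t) ^ ((1 + p)/2) :=
      mul_nonneg hσ.le (Real.rpow_nonneg hB0 _)
    have h3 : 0 ≤ ρ * (2 * μ * V t) ^ ((1 + q)/2) :=
      mul_nonneg hρ.le (Real.rpow_nonneg hB0 _)
    linarith
  by_contra hne
  have hV0 : 0 < V t₀ := lt_of_le_of_ne (hVnn t₀) (Ne.symm hne)
  have hVpos : ∀ t ∈ Set.Icc (0:ℝ) t₀, 0 < V t := by
    intro t ht
    have h1 : V t₀ ≤ V t + 0 * (t₀ - t) :=
      decay_le ht.2 (fun s hs => hVd s ⟨le_trans ht.1 hs.1, hs.2⟩) (fun s _ => hD0 s)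
    simp at h1
    linarith
  have hBpos : ∀ t ∈ Set.Icc (0:ℝ) t₀, 0 < 2 * μ * V t := by
    intro t ht
    have := hVpos t ht
    positivity
  -- phase 1: U := (2μV) ^ ((1-q)/2) grows at rate ≥ c2
  have hIcc1 : Set.Icc (0:ℝ) (1/c2) ⊆ Set.Icc (0:ℝ) t₀ :=
    Set.Icc_subset_Icc le_rfl hT1t0
  have hUd : ∀ t ∈ Set.Icc (0:ℝ) (1/c2),
      HasDerivAt (fun s => (2 * μ * V s) ^ ((1 - q)/2))
        ((2 * μ * D t) * ((1 - q)/2) * (2 * μ * V t) ^ ((1 - q)/2 - 1)) t := by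
    intro t ht
    exact ((hVd t (hIcc1 ht)).const_mul (2 * μ)).rpow_const
      (Or.inl (ne_of_gt (hBpos t (hIcc1 ht))))
  have hUb : ∀ t ∈ Set.Icc (0:ℝ) (1/c2),
      c2 ≤ (2 * μ * D t) * ((1 - q)/2) * (2 * μ * V t) ^ ((1 - q)/2 - 1) := by
    intro t ht
    have hB := hBpos t (hIcc1 ht)
    have hPQ : (2 * μ * V t) ^ ((1 + q)/2) * (2 * μ * V t) ^ ((1 - q)/2 - 1) = 1 := by
      have he : (1 + q)/2 + ((1 - q)/2 - 1) = 0 := by ring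
      rw [← Real.rpow_add hB, he, Real.rpow_zero]
    have hQpos : 0 < (2 * μ * V t) ^ ((1 - q)/2 - 1) := Real.rpow_pos_of_pos hB _
    have hD' : D t ≤ -ρ * (2 * μ * V t) ^ ((1 + q)/2) := by
      have h1 := hDB t
      have h2 : 0 ≤ σ * (2 * μ * V t) ^ ((1 + p)/2) :=
        mul_nonneg hσ.le (Real.rpow_nonneg hB.le _)
      linarith
    have h3 : D t * (2 * μ * V t) ^ ((1 - q)/2 - 1) ≤ -ρ := by
      have := mul_le_mul_of_nonneg_right hD' hQpos.le
      nlinarith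
    have heq : (2 * μ * D t) * ((1 - q)/2) * (2 * μ * V t) ^ ((1 - q)/2 - 1)
        = -(μ * (q - 1)) * (D t * (2 * μ * V t) ^ ((1 - q)/2 - 1)) := by ring
    rw [heq, hc2def]
    have h4 := mul_le_mul_of_nonneg_left h3 (by positivity : (0:ℝ) ≤ μ * (q - 1))
    nlinarith [h4]
  have hUgrow : (2 * μ * V 0) ^ ((1 - q)/2) + c2 * (1/c2)
      ≤ (2 * μ * V (1/c2)) ^ ((1 - q)/2) := by
    have := decay_le (c := -c2) (h := fun s => -((2 * μ * V s) ^ ((1 - q)/2)))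
      (h' := fun s => -((2 * μ * D s) * ((1 - q)/2) * (2 * μ * V s) ^ ((1 - q)/2 - 1))) hT1
      (fun t ht => (hUd t ht).neg)
      (fun t ht => neg_le_neg (hUb t ht))
    linarith
  have hU0pos : 0 < (2 * μ * V 0) ^ ((1 - q)/2) :=
    Real.rpow_pos_of_pos (hBpos 0 ⟨le_rfl, ht00⟩) _
  have hUT1 : 1 ≤ (2 * μ * V (1/c2)) ^ ((1 - q)/2) := by
    have hcc : c2 * (1/c2) = 1 := by field_simp
    linarith
  -- hence 2μ V(1/c2) ≤ 1
  have hBle : 2 * μ * V (1/c2) ≤ 1 := by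
    by_contra h
    push_neg at h
    have := Real.rpow_lt_one_of_one_lt_of_neg h (by linarith : (1 - q)/2 < 0)
    linarith
  -- phase 2: W := (2μV) ^ ((1-p)/2) decays at rate ≥ c1
  have hIcc2 : Set.Icc (1/c2) t₀ ⊆ Set.Icc (0:ℝ) t₀ :=
    Set.Icc_subset_Icc hT1 le_rfl
  have hWd : ∀ t ∈ Set.Icc (1/c2) t₀,
      HasDerivAt (fun s => (2 * μ * V s) ^ ((1 - p)/2))
        ((2 * μ * D t) * ((1 - p)/2) * (2 * μ * V t) ^ ((1 - p)/2 - 1)) t := by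
    intro t ht
    exact ((hVd t (hIcc2 ht)).const_mul (2 * μ)).rpow_const
      (Or.inl (ne_of_gt (hBpos t (hIcc2 ht))))
  have hWb : ∀ t ∈ Set.Icc (1/c2) t₀,
      (2 * μ * D t) * ((1 - p)/2) * (2 * μ * V t) ^ ((1 - p)/2 - 1) ≤ -c1 := by
    intro t ht
    have hB := hBpos t (hIcc2 ht)
    have hPQ : (2 * μ * V t) ^ ((1 + p)/2) * (2 * μ * V t) ^ ((1 - p)/2 - 1) = 1 := by
      have he : (1 + p)/2 + ((1 - p)/2 - 1) = 0 := by ring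
      rw [← Real.rpow_add hB, he, Real.rpow_zero]
    have hQpos : 0 < (2 * μ * V t) ^ ((1 - p)/2 - 1) := Real.rpow_pos_of_pos hB _
    have hD' : D t ≤ -σ * (2 * μ * V t) ^ ((1 + p)/2) := by
      have h1 := hDB t
      have h2 : 0 ≤ ρ * (2 * μ * V t) ^ ((1 + q)/2) :=
        mul_nonneg hρ.le (Real.rpow_nonneg hB.le _)
      linarith
    have h3 : D t * (2 * μ * V t) ^ ((1 - p)/2 - 1) ≤ -σ := by
      have := mul_le_mul_of_nonneg_right hD' hQpos.le
      nlinarith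
    have heq : (2 * μ * D t) * ((1 - p)/2) * (2 * μ * V t) ^ ((1 - p)/2 - 1)
        = (μ * (1 - p)) * (D t * (2 * μ * V t) ^ ((1 - p)/2 - 1)) := by ring
    rw [heq, hc1def]
    have h4 := mul_le_mul_of_nonneg_left h3 (by positivity : (0:ℝ) ≤ μ * (1 - p))
    nlinarith [h4]
  have hWdec : (2 * μ * V t₀) ^ ((1 - p)/2)
      ≤ (2 * μ * V (1/c2)) ^ ((1 - p)/2) + (-c1) * (t₀ - 1/c2) :=
    decay_le hT1t0 hWd hWb
  have hWT1 : (2 * μ * V (1/c2)) ^ ((1 - p)/2) ≤ 1 :=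
    Real.rpow_le_one (hBpos _ ⟨hT1, hT1t0⟩).le hBle (by linarith)
  have ht0' : 1/c1 ≤ t₀ - 1/c2 := by linarith
  have hfinal : 1 ≤ c1 * (t₀ - 1/c2) := by
    have := mul_le_mul_of_nonneg_left ht0' hc1.le
    rw [mul_one_div, div_self (ne_of_gt hc1)] at this
    linarith
  have hWpos : 0 < (2 * μ * V t₀) ^ ((1 - p)/2) :=
    Real.rpow_pos_of_pos (hBpos t₀ ⟨ht00, le_rfl⟩) _
  linarith

/-- Theorem 1: fixed-time convergence of the first-order FxT gradient flow under
the Polyak–Łojasiewicz inequality. -/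
theorem fxtgf_fixed_time_convergence
    {n : ℕ} (f : EuclideanSpace ℝ (Fin n) → ℝ) (fstar μ σ ρ p q : ℝ)
    (hf : ContDiff ℝ 1 f)
    (hmin : ∃ z, f z = fstar) (hlb : ∀ z, fstar ≤ f z)
    (hμ : 0 < μ)
    (hPL : ∀ z, μ * (f z - fstar) ≤ (1/2) * ‖gradient f z‖ ^ 2)
    (hσ : 0 < σ) (hρ : 0 < ρ) (hp : p ∈ Set.Ico (0:ℝ) 1) (hq : 1 < q)
    (g : EuclideanSpace ℝ (Fin n) → EuclideanSpace ℝ (Fin n))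
    (hg : ∀ y, σ * ‖y‖ ^ (1 + p) + ρ * ‖y‖ ^ (1 + q) ≤ ⟪g y, y⟫)
    (x : ℝ → EuclideanSpace ℝ (Fin n))
    (hx : ∀ t ≥ (0:ℝ), HasDerivAt x (-(g (gradient f (x t)))) t) :
    ∀ t : ℝ, 1 / (μ * σ * (1 - p)) + 1 / (μ * ρ * (q - 1)) ≤ t → f (x t) = fstar := by
  obtain ⟨hp0, hp1⟩ := hp
  intro t₀ ht₀
  have ht00 : (0:ℝ) ≤ t₀ := by
    refine le_trans (le_of_lt ?_) ht₀
    have h1p : 0 < 1 - p := by linarith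
    have hq1 : 0 < q - 1 := by linarith
    positivity
  have hVnn : ∀ t : ℝ, 0 ≤ f (x t) - fstar := fun t => sub_nonneg.2 (hlb (x t))
  have hVd : ∀ t ∈ Set.Icc (0:ℝ) t₀,
      HasDerivAt (fun s => f (x s) - fstar)
        (-⟪g (gradient f (x t)), gradient f (x t)⟫) t := by
    intro t ht
    have hgrad : HasGradientAt f (gradient f (x t)) (x t) :=
      ((hf.differentiable one_ne_zero) (x t)).hasGradientAt
    have h1 : HasDerivAt (fun s => f (x s))
        ((InnerProductSpace.toDual ℝ _ (gradient f (x t))) (-(g (gradient f (x t))))) t :=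
      hgrad.hasFDerivAt.comp_hasDerivAt t (hx t ht.1)
    have h2 : ((InnerProductSpace.toDual ℝ _ (gradient f (x t))) (-(g (gradient f (x t)))))
        = -⟪g (gradient f (x t)), gradient f (x t)⟫ := by
      simp only [InnerProductSpace.toDual_apply_apply, inner_neg_right]
      rw [real_inner_comm]
    rw [h2] at h1
    exact h1.sub_const fstar
  have hDB : ∀ t : ℝ, -⟪g (gradient f (x t)), gradient f (x t)⟫
      ≤ -σ * (2 * μ * (f (x t) - fstar)) ^ ((1 + p)/2)
        - ρ * (2 * μ * (f (x t) - fstar)) ^ ((1 + q)/2) := by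
    intro t
    have hB0 : (0:ℝ) ≤ 2 * μ * (f (x t) - fstar) := by have := hVnn t; positivity
    have hsq : Real.sqrt (2 * μ * (f (x t) - fstar)) ≤ ‖gradient f (x t)‖ := by
      have h0 := hPL (x t)
      have h1 : 2 * μ * (f (x t) - fstar) ≤ ‖gradient f (x t)‖ ^ 2 := by nlinarith
      calc Real.sqrt (2 * μ * (f (x t) - fstar)) ≤ Real.sqrt (‖gradient f (x t)‖ ^ 2) :=
            Real.sqrt_le_sqrt h1
        _ = ‖gradient f (x t)‖ := Real.sqrt_sq (norm_nonneg _)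
    have key : ∀ r : ℝ, 0 ≤ r →
        (2 * μ * (f (x t) - fstar)) ^ ((1 + r)/2) ≤ ‖gradient f (x t)‖ ^ (1 + r) := by
      intro r hr
      have h1 : (2 * μ * (f (x t) - fstar)) ^ ((1 + r)/2)
          = (Real.sqrt (2 * μ * (f (x t) - fstar))) ^ (1 + r) := by
        rw [Real.sqrt_eq_rpow, ← Real.rpow_mul hB0]
        congr 1
        ring
      rw [h1]
      exact Real.rpow_le_rpow (Real.sqrt_nonneg _) hsq (by linarith)
    have k1 := mul_le_mul_of_nonneg_left (key p hp0) hσ.le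
    have k2 := mul_le_mul_of_nonneg_left (key q (by linarith)) hρ.le
    have hgy := hg (gradient f (x t))
    linarith
  have := fxt_aux (fun s => f (x s) - fstar)
    (fun s => -⟪g (gradient f (x s)), gradient f (x s)⟫) μ σ ρ p q t₀
    hμ hσ hρ hp0 hp1 hq hVnn hVd hDB ht₀
  linarith
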